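/- Equivalence of the Writer deletion pipeline and the sentinel-filtering pipeline (single stage): let sentinel s₀ : α be a designated deletion marker and f : Zipper α → α any local rule. Define the Writer lift fW : Set ℕ × Zipper α → Set ℕ × α by fW (w, z) = (w ∪ {(z.left).length}, extract z) if f z = s₀, and fW (w, z) = (w, f z) otherwise. Then for every zipper z, materialize (extendW fW (∅, z)) = (toList (extend f z)).filter (· ≠ s₀), where materialize (w, z') deletes from toList z' the elements at the index positions in w. That is, accumulating deletion positions in the Writer comonad and deleting once at the end produces exactly the same string as inserting the sentinel at each deleted position and filtering it out afterwards. -/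

import Mathlib

/-- A list zipper: a focused element with left context (stored reversed,
nearest neighbor first) and right context. -/
structure Zipper (α : Type*) where
  left : List α
  focus : α
  right : List α

namespace Zipper

variable {α β γ δ : Type*}

/-- Extract the focused element. -/
def extract (z : Zipper α) : α := z.focus

/-- Move the focus one step to the left (identity if the left context is empty). -/
def moveLeft : Zipper α → Zipper α
  | ⟨a :: l, c, r⟩ => ⟨l, a, c :: r⟩
  | z => z

/-- Move the focus one step to the right (identity if the right context is empty). -/
def moveRight : Zipper α → Zipper α
  | ⟨l, c, b :: r⟩ => ⟨c :: l, b, r⟩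
  | z => z

/-- Auxiliary: successive left shifts, structurally on the left context. -/
def leftsAux : List α → α → List α → List (Zipper α)
  | [], _, _ => []
  | a :: l, c, r => ⟨l, a, c :: r⟩ :: leftsAux l a (c :: r)

/-- The list [moveLeft z, moveLeft (moveLeft z), …] of successive left shifts. -/
def lefts (z : Zipper α) : List (Zipper α) := leftsAux z.left z.focus z.right

/-- Auxiliary: successive right shifts, structurally on the right context. -/
def rightsAux : List α → α → List α → List (Zipper α)
  | _, _, [] => []
  | l, c, b :: r => ⟨c :: l, b, r⟩ :: rightsAux (c :: l) b r

/-- The list [moveRight z, moveRight (moveRight z), …] of successive right shifts. -/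
def rights (z : Zipper α) : List (Zipper α) := rightsAux z.left z.focus z.right

/-- CoKleisli extension: apply the local rule `f` at every position. -/
def extend (f : Zipper α → β) (z : Zipper α) : Zipper β :=
  ⟨(lefts z).map f, f z, (rights z).map f⟩

/-- The underlying list of a zipper. -/
def toList (z : Zipper α) : List α := z.left.reverse ++ [z.focus] ++ z.right

/-- The zipper refocused at position `i` (intended for `i < (toList z).length`). -/
def focusAt (z : Zipper α) (i : ℕ) : Zipper α :=
  ⟨((toList z).take i).reverse, (toList z).getD i z.focus, (toList z).drop (i + 1)⟩

end Zipper

open Zipper in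
/-- Writer comonad counit: empty deletion set paired with the zipper focus. -/
def extractW {α : Type*} (p : Set ℕ × Zipper α) : Set ℕ × α :=
  (∅, Zipper.extract p.2)

open Zipper in
/-- Writer comonad extension: accumulate (by union) the deletion sets produced
by `f` at every position, and extend the value component over the zipper. -/
def extendW {α β : Type*} (f : Set ℕ × Zipper α → Set ℕ × β)
    (p : Set ℕ × Zipper α) : Set ℕ × Zipper β :=
  (p.1 ∪ ⋃ i ∈ Finset.range (Zipper.toList p.2).length, (f (p.1, Zipper.focusAt p.2 i)).1,
   Zipper.extend (fun z' => (f (p.1, z')).2) p.2)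

/-- The Writer lift of a local rule f with sentinel s₀: if f fires the sentinel,
record the current position in the deletion set and keep the original focus;
otherwise apply f with no deletion. -/
def writerLift {α : Type*} [DecidableEq α] (s₀ : α) (f : Zipper α → α) :
    Set ℕ × Zipper α → Set ℕ × α :=
  fun p =>
    if f p.2 = s₀ then (p.1 ∪ {p.2.left.length}, Zipper.extract p.2)
    else (p.1, f p.2)

open Classical in
/-- Materialize: delete from the underlying list of the zipper the elements
whose index lies in the deletion set. -/
noncomputable def materialize {α : Type*} (p : Set ℕ × Zipper α) : List α :=
  (((Zipper.toList p.2).zipIdx.map Prod.swap).filter (fun q => q.1 ∉ p.1)).map Prod.snd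

section Aux
open Zipper
variable {α β : Type*}

theorem toList_length' (z : Zipper α) :
    (toList z).length = z.left.length + 1 + z.right.length := by
  simp [toList]; omega

theorem focusAt_congr' {z z' : Zipper α} (h : toList z = toList z') {i : ℕ}
    (hi : i < (toList z).length) : focusAt z i = focusAt z' i := by
  have hi' : i < (toList z').length := h ▸ hi
  unfold focusAt
  rw [h, List.getD_eq_getElem _ _ hi', List.getD_eq_getElem _ _ hi']

theorem toList_cons (a : α) (l : List α) (c : α) (r : List α) :
    toList ⟨l, a, c :: r⟩ = toList ⟨a :: l, c, r⟩ := by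
  simp [toList]

theorem focusAt_pos (z : Zipper α) : focusAt z z.left.length = z := by
  obtain ⟨l, c, r⟩ := z
  have hlen : l.length < (toList ⟨l, c, r⟩ : List α).length := by
    simp [toList]
  unfold focusAt
  rw [List.getD_eq_getElem _ _ hlen]
  congr 1
  · show (List.take l.length (toList ⟨l, c, r⟩)).reverse = l
    unfold toList
    rw [List.append_assoc, List.take_left' (by simp), List.reverse_reverse]
  · show (toList ⟨l, c, r⟩)[l.length] = c
    simp only [toList]
    rw [List.getElem_append_left (by simp), List.getElem_append_right (by simp)]
    simp
  · show List.drop (l.length + 1) (toList ⟨l, c, r⟩) = r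
    unfold toList
    rw [List.drop_left' (by simp)]

theorem focusAt_sp (l : List α) (c b : α) (r : List α) :
    focusAt ⟨l, c, b :: r⟩ (l.length + 1) = ⟨c :: l, b, r⟩ := by
  have hlen : l.length + 1 < (toList ⟨l, c, b :: r⟩ : List α).length := by
    simp [toList]
  unfold focusAt
  rw [List.getD_eq_getElem _ _ hlen]
  congr 1
  · show (List.take (l.length + 1) (toList ⟨l, c, b :: r⟩)).reverse = c :: l
    unfold toList
    rw [List.take_left' (by simp)]; simp
  · show (toList ⟨l, c, b :: r⟩)[l.length + 1] = b
    simp only [toList]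
    rw [List.getElem_append_right (by simp)]
    simp
  · show List.drop (l.length + 1 + 1) (toList ⟨l, c, b :: r⟩) = r
    unfold toList
    have : l.reverse ++ [c] ++ b :: r = (l.reverse ++ [c] ++ [b]) ++ r := by simp
    rw [this, List.drop_left' (by simp)]

theorem leftsAux_rev (l : List α) (c : α) (r : List α) :
    (leftsAux l c r).reverse = (List.range l.length).map (focusAt ⟨l, c, r⟩) := by
  induction l generalizing c r with
  | nil => simp [leftsAux]
  | cons a l ih =>
    simp only [leftsAux, List.reverse_cons, List.length_cons, List.range_succ,
      List.map_append, ih]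
    congr 1
    · apply List.map_congr_left
      intro j hj
      simp only [List.mem_range] at hj
      apply focusAt_congr' (toList_cons a l c r)
      simp [toList]; omega
    · simp only [List.map_cons, List.map_nil]
      congr 1
      rw [← focusAt_congr' (toList_cons a l c r) (by simp [toList])]
      exact (focusAt_pos (⟨l, a, c :: r⟩ : Zipper α)).symm

theorem rightsAux_eq (r : List α) (l : List α) (c : α) :
    rightsAux l c r = (List.range r.length).map (fun j => focusAt ⟨l, c, r⟩ (l.length + 1 + j)) := by
  induction r generalizing l c with
  | nil => simp [rightsAux]
  | cons b r ih =>
    simp only [rightsAux, List.length_cons, List.range_succ_eq_map, List.map_cons,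
      List.map_map, ih]
    congr 1
    · rw [show l.length + 1 + 0 = l.length + 1 by omega, focusAt_sp]
    · apply List.map_congr_left
      intro j hj
      simp only [List.mem_range] at hj
      simp only [Function.comp_apply, List.length_cons, Nat.succ_eq_add_one]
      rw [show l.length + 1 + 1 + j = l.length + 1 + (j + 1) by omega]
      exact (focusAt_congr' (toList_cons c l b r) (by simp [toList]; omega)).symm

theorem toList_extend (f : Zipper α → β) (z : Zipper α) :
    toList (extend f z) = (List.range (toList z).length).map (fun i => f (focusAt z i)) := by
  obtain ⟨l, c, r⟩ := z
  show ((leftsAux l c r).map f).reverse ++ [f ⟨l, c, r⟩] ++ (rightsAux l c r).map f = _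
  rw [toList_length']
  show _ = (List.range (l.length + 1 + r.length)).map _
  rw [show l.length + 1 + r.length = (l.length + 1) + r.length by omega,
    List.range_add, List.range_succ, List.map_append, List.map_append,
    ← List.map_reverse, leftsAux_rev, rightsAux_eq, List.map_map, List.map_map, List.map_map]
  congr 2
  · simp only [List.map_cons, List.map_nil]
    congr 2
    exact (focusAt_pos (⟨l, c, r⟩ : Zipper α)).symm

theorem focusAt_left_length (z : Zipper α) {i : ℕ} (hi : i < (toList z).length) :
    (focusAt z i).left.length = i := by
  unfold focusAt
  simp only [List.length_reverse, List.length_take]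
  omega

end Aux

theorem enum_map_range' {α : Type*} (v : ℕ → α) (n : ℕ) :
    ((List.range n).map v).zipIdx.map Prod.swap = (List.range n).map (fun i => (i, v i)) := by
  apply List.ext_getElem (by simp)
  intro i h1 h2
  simp

/-- Equivalence of the Writer deletion pipeline and the sentinel-filtering
pipeline (single stage). -/
theorem writer_pipeline_eq_sentinel_pipeline {α : Type*} [DecidableEq α]
    (s₀ : α) (f : Zipper α → α) (z : Zipper α) :
    materialize (extendW (writerLift s₀ f) (∅, z)) =
      (Zipper.toList (Zipper.extend f z)).filter (· ≠ s₀) := by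
  classical
  set n := (Zipper.toList z).length with hn
  set W := (extendW (writerLift s₀ f) (∅, z)).1 with hWdef
  have hW : ∀ i, i ∈ W ↔ i < n ∧ f (Zipper.focusAt z i) = s₀ := by
    intro i
    simp only [hWdef, extendW, writerLift, Set.mem_union, Set.mem_empty_iff_false, false_or,
      Set.mem_iUnion, Finset.mem_range]
    constructor
    · rintro ⟨j, hj, hmem⟩
      split at hmem
      · next h =>
        simp only [Set.mem_union, Set.mem_empty_iff_false, false_or, Set.mem_singleton_iff] at hmem
        rw [focusAt_left_length z hj] at hmem
        subst hmem
        exact ⟨hj, h⟩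
      · simp at hmem
    · rintro ⟨hi, hs⟩
      refine ⟨i, hi, ?_⟩
      simp only [hs, if_pos rfl]
      simp [focusAt_left_length z hi]
  unfold materialize
  show ((Zipper.toList (extendW (writerLift s₀ f) (∅, z)).2).zipIdx.map Prod.swap |>.filter
        (fun q => q.1 ∉ W)).map Prod.snd = _
  have h2 : (extendW (writerLift s₀ f) (∅, z)).2 =
      Zipper.extend (fun z' => (writerLift s₀ f (∅, z')).2) z := rfl
  rw [h2, toList_extend, toList_extend, ← hn, enum_map_range', List.filter_map,
    List.filter_map, List.map_map]
  have hfil : List.filter ((fun (q : ℕ × α) => decide (q.1 ∉ W)) ∘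
        (fun i => (i, (writerLift s₀ f (∅, Zipper.focusAt z i)).2))) (List.range n) =
      List.filter ((fun a => decide ¬a = s₀) ∘ (fun i => f (Zipper.focusAt z i)))
        (List.range n) := by
    apply List.filter_congr
    intro i hi
    simp only [List.mem_range] at hi
    simp only [Function.comp_apply, decide_eq_decide]
    rw [hW i]
    constructor
    · intro h hs; exact h ⟨hi, hs⟩
    · intro h hs; exact h hs.2
  rw [hfil]
  apply List.map_congr_left
  intro i hi
  simp only [List.mem_filter, Function.comp_apply, decide_eq_true_eq, List.mem_range] at hi
  simp [writerLift, hi.2]
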